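/- For n ≥ 2 the expected number of samples to recover at least one coupon's label in the 2-LCCP model equals 1 + ∑_{i=1}^{⌊n/2⌋} (n!/((n−2i)!·2^i)) · ((m−i)!/m!), where m = (n−2)(n+1)/2, and this quantity is O(n). -/

import Mathlib

open Finset

namespace LCCP2

variable {n : ℕ}

abbrev Pair (n : ℕ) := {P : Finset (Fin n) // P.card = 2}

def compat {t : ℕ} (g : Fin t → Pair n) : Prop :=
  ∀ i j, (g i : Finset (Fin n)) ≠ (g j : Finset (Fin n)) →
    Disjoint (g i : Finset (Fin n)) (g j : Finset (Fin n))

instance {t : ℕ} : DecidablePred (fun g : Fin t → Pair n => compat g) := fun g => by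
  unfold compat; infer_instance

def imc {t : ℕ} (g : Fin t → Pair n) : ℕ := (Finset.univ.image g).card

def b (n t k : ℕ) : ℕ :=
  (Finset.univ.filter (fun g : Fin t → Pair n => compat g ∧ imc g = k)).card

lemma nat_card_sigma {ι : Type*} [Fintype ι] (F : ι → Type*) [∀ i, Fintype (F i)] :
    Nat.card (Σ i, F i) = ∑ i, Nat.card (F i) := by
  simp [Nat.card_eq_fintype_card, Fintype.card_sigma]

lemma nat_card_subtype {α : Type*} [Fintype α] (p : α → Prop) [DecidablePred p] :
    Nat.card {x // p x} = (Finset.univ.filter p).card := by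
  rw [Nat.card_eq_fintype_card, Fintype.card_subtype]

lemma union_card {t : ℕ} {g : Fin t → Pair n} (hg : compat g) :
    (Finset.univ.biUnion fun i => (g i : Finset (Fin n))).card = 2 * imc g := by
  have h1 : (Finset.univ.biUnion fun i => (g i : Finset (Fin n)))
      = (Finset.univ.image g).biUnion (fun P => (P : Finset (Fin n))) := by
    rw [Finset.image_biUnion]
  rw [h1, Finset.card_biUnion, imc]
  · rw [Finset.sum_congr rfl (fun P _ => P.prop), Finset.sum_const, smul_eq_mul, mul_comm]
  · intro P hP Q hQ hPQ
    obtain ⟨i, -, rfl⟩ := Finset.mem_image.1 hP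
    obtain ⟨j, -, rfl⟩ := Finset.mem_image.1 hQ
    exact hg i j (fun hc => hPQ (Subtype.ext hc))

lemma imc_le {t : ℕ} {g : Fin t → Pair n} (hg : compat g) : 2 * imc g ≤ n := by
  have h := union_card hg
  have h2 : (Finset.univ.biUnion fun i => (g i : Finset (Fin n))).card ≤ n := by
    have := Finset.card_le_univ (Finset.univ.biUnion fun i => (g i : Finset (Fin n)))
    simpa using this
  omega

lemma image_cons {t : ℕ} (p : Pair n) (h : Fin t → Pair n) :
    Finset.univ.image (Fin.cons p h) = insert p (Finset.univ.image h) := by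
  ext x
  simp [Finset.mem_image, Fin.exists_fin_succ, eq_comm]

lemma compat_cons_iff {t : ℕ} (p : Pair n) (h : Fin t → Pair n) :
    compat (Fin.cons p h) ↔ compat h ∧
      ∀ i, (p : Finset (Fin n)) ≠ (h i : Finset (Fin n)) →
        Disjoint (p : Finset (Fin n)) (h i : Finset (Fin n)) := by
  constructor
  · intro hc
    refine ⟨fun i j hij => ?_, fun i hpi => ?_⟩
    · exact hc i.succ j.succ hij
    · exact hc 0 i.succ hpi
  · rintro ⟨hh, hp⟩ i j hij
    induction i using Fin.cases with
    | zero => induction j using Fin.cases with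
      | zero => simp at hij
      | succ j => exact hp j hij
    | succ i => induction j using Fin.cases with
      | zero => exact (hp i (fun e => hij e.symm)).symm
      | succ j => exact hh i j hij

lemma b_zero_zero : b n 0 0 = 1 := by
  rw [b]
  rw [show (Finset.univ.filter (fun g : Fin 0 → Pair n => compat g ∧ imc g = 0))
      = Finset.univ from by
    refine Finset.filter_true_of_mem fun g _ => ⟨fun i j _ => i.elim0, ?_⟩
    simp [imc]]
  simp
lemma b_zero_succ (k : ℕ) : b n 0 (k + 1) = 0 := by
  rw [b, Finset.card_eq_zero, Finset.filter_eq_empty_iff]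
  intro g _
  rw [not_and]
  intro _
  simp [imc]
lemma b_succ_zero (t : ℕ) : b n (t + 1) 0 = 0 := by
  rw [b, Finset.card_eq_zero, Finset.filter_eq_empty_iff]
  intro g _
  rw [not_and]
  intro _
  simp only [imc, Finset.card_eq_zero, Finset.image_eq_empty]
  simp [← Finset.nonempty_iff_ne_empty]

lemma fiber_card (t k : ℕ) (h : Fin t → Pair n) :
    Nat.card {p : Pair n // compat (Fin.cons p h) ∧ imc (Fin.cons p h) = k + 1}
      = if compat h ∧ imc h = k + 1 then k + 1
        else if compat h ∧ imc h = k then (n - 2 * k).choose 2 else 0 := by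
  by_cases hA : compat h ∧ imc h = k + 1
  · rw [if_pos hA]
    have he : ∀ p : Pair n,
        (compat (Fin.cons p h) ∧ imc (Fin.cons p h) = k + 1) ↔ p ∈ Finset.univ.image h := by
      intro p
      constructor
      · rintro ⟨hc, him⟩
        by_contra hmem
        rw [imc, image_cons, Finset.card_insert_of_notMem hmem] at him
        have h2 := hA.2
        rw [imc] at h2
        omega
      · intro hmem
        obtain ⟨i0, -, hi0⟩ := Finset.mem_image.1 hmem
        constructor
        · rw [compat_cons_iff]
          refine ⟨hA.1, fun i hpi => ?_⟩
          rw [← hi0] at hpi ⊢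
          exact hA.1 i0 i hpi
        · rw [imc, image_cons, Finset.insert_eq_self.2 hmem]
          exact hA.2
    rw [Nat.card_congr (Equiv.subtypeEquivRight he), ← hA.2, imc]
    exact Nat.card_eq_finsetCard _
  · rw [if_neg hA]
    by_cases hB : compat h ∧ imc h = k
    · rw [if_pos hB]
      have he : ∀ p : Pair n,
          (compat (Fin.cons p h) ∧ imc (Fin.cons p h) = k + 1) ↔
            ∀ i, Disjoint (p : Finset (Fin n)) (h i : Finset (Fin n)) := by
        intro p
        constructor
        · rintro ⟨hc, him⟩
          have hmem : p ∉ Finset.univ.image h := by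
            intro hmem
            rw [imc, image_cons, Finset.insert_eq_self.2 hmem] at him
            exact hA ⟨hB.1, him⟩
          intro i
          have hne : (p : Finset (Fin n)) ≠ (h i : Finset (Fin n)) := by
            intro e
            exact hmem (Finset.mem_image.2 ⟨i, Finset.mem_univ i, (Subtype.ext e).symm⟩)
          exact ((compat_cons_iff p h).1 hc).2 i hne
        · intro hd
          have hmem : p ∉ Finset.univ.image h := by
            intro hmem
            obtain ⟨i0, -, hi0⟩ := Finset.mem_image.1 hmem
            have h2 := hd i0
            rw [← hi0, Finset.disjoint_self_iff_empty] at h2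
            have h3 := p.prop
            rw [← hi0, h2] at h3
            simp at h3
          refine ⟨(compat_cons_iff p h).2 ⟨hB.1, fun i _ => hd i⟩, ?_⟩
          rw [imc, image_cons, Finset.card_insert_of_notMem hmem]
          have h2 := hB.2
          rw [imc] at h2
          omega
      rw [Nat.card_congr (Equiv.subtypeEquivRight he)]
      set U := Finset.univ.biUnion (fun i => (h i : Finset (Fin n))) with hU
      have he2 : ∀ p : Pair n,
          (∀ i, Disjoint (p : Finset (Fin n)) (h i : Finset (Fin n))) ↔
            (p : Finset (Fin n)) ∈ Finset.powersetCard 2 Uᶜ := by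
        intro p
        rw [Finset.mem_powersetCard]
        have hd : Disjoint (p : Finset (Fin n)) U ↔
            ∀ i, Disjoint (p : Finset (Fin n)) (h i : Finset (Fin n)) := by
          rw [hU, Finset.disjoint_biUnion_right]
          simp
        rw [and_comm, and_iff_right p.prop, ← hd]
        exact le_compl_iff_disjoint_right.symm
      have he3 : {p : Pair n // ∀ i, Disjoint (p : Finset (Fin n)) (h i : Finset (Fin n))}
          ≃ {s : Finset (Fin n) // s ∈ Finset.powersetCard 2 Uᶜ} :=
        { toFun := fun p => ⟨p.1.1, (he2 p.1).1 p.2⟩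
          invFun := fun s => ⟨⟨s.1, (Finset.mem_powersetCard.1 s.2).2⟩, (he2 _).2 s.2⟩
          left_inv := fun p => rfl
          right_inv := fun s => rfl }
      rw [Nat.card_congr he3, Nat.card_eq_finsetCard, Finset.card_powersetCard,
        Finset.card_compl, union_card hB.1, hB.2, Fintype.card_fin]
    · rw [if_neg hB]
      have : IsEmpty {p : Pair n // compat (Fin.cons p h) ∧ imc (Fin.cons p h) = k + 1} := by
        refine ⟨fun q => ?_⟩
        obtain ⟨p, hc, him⟩ := q
        have hch : compat h := ((compat_cons_iff p h).1 hc).1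
        by_cases hmem : p ∈ Finset.univ.image h
        · rw [imc, image_cons, Finset.insert_eq_self.2 hmem] at him
          exact hA ⟨hch, him⟩
        · rw [imc, image_cons, Finset.card_insert_of_notMem hmem] at him
          exact hB ⟨hch, by rw [imc]; omega⟩
      exact Nat.card_of_isEmpty

lemma b_rec (t k : ℕ) :
    b n (t + 1) (k + 1) = (k + 1) * b n t (k + 1) + (n - 2 * k).choose 2 * b n t k := by
  classical
  have E : (Σ h : Fin t → Pair n,
        {p : Pair n // compat (Fin.cons p h) ∧ imc (Fin.cons p h) = k + 1})
      ≃ {g : Fin (t + 1) → Pair n // compat g ∧ imc g = k + 1} :=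
    { toFun := fun x => ⟨Fin.cons x.2.1 x.1, x.2.2⟩
      invFun := fun g => ⟨Fin.tail g.1, ⟨g.1 0, by
        rw [Fin.cons_self_tail]; exact g.2⟩⟩
      left_inv := fun x => by
        obtain ⟨h, p, hp⟩ := x
        simp [Fin.tail_cons]
        rfl
      right_inv := fun g => Subtype.ext (Fin.cons_self_tail g.1) }
  have h1 : b n (t + 1) (k + 1)
      = ∑ h : Fin t → Pair n,
          Nat.card {p : Pair n // compat (Fin.cons p h) ∧ imc (Fin.cons p h) = k + 1} := by
    rw [b, ← Fintype.card_subtype, Fintype.card_eq_nat_card, ← Nat.card_congr E,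
      nat_card_sigma]
  rw [h1]
  have h2 : ∀ h : Fin t → Pair n,
      Nat.card {p : Pair n // compat (Fin.cons p h) ∧ imc (Fin.cons p h) = k + 1}
        = if compat h ∧ imc h = k + 1 then k + 1
          else if compat h ∧ imc h = k then (n - 2 * k).choose 2 else 0 :=
    fiber_card t k
  rw [Finset.sum_congr rfl (fun h _ => h2 h), Finset.sum_ite, Finset.sum_ite]
  have h3 : (Finset.filter (fun h : Fin t → Pair n => ¬(compat h ∧ imc h = k + 1))
        Finset.univ).filter (fun h => compat h ∧ imc h = k)
      = Finset.univ.filter (fun h => compat h ∧ imc h = k) := by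
    rw [Finset.filter_filter]
    refine Finset.filter_congr fun h _ => ?_
    constructor
    · exact fun hx => hx.2
    · exact fun hx => ⟨fun hy => by omega, hx⟩
  rw [h3]
  simp only [Finset.sum_const, smul_eq_mul, zero_mul, add_zero, b]
  ring

lemma card_good (t : ℕ) :
    Nat.card {g : Fin t → Pair n // compat g}
      = ∑ k ∈ Finset.range (n / 2 + 1), b n t k := by
  classical
  rw [nat_card_subtype]
  rw [Finset.card_eq_sum_card_fiberwise (f := imc) (t := Finset.range (n / 2 + 1))
    (fun g hg => by
      rw [Finset.mem_coe, Finset.mem_filter] at hg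
      have := imc_le hg.2
      rw [Finset.mem_coe, Finset.mem_range]
      omega)]
  refine Finset.sum_congr rfl fun k _ => ?_
  rw [b, Finset.filter_filter]

lemma b_le (t k : ℕ) : b n t k ≤ (n.choose 2) ^ k * (k + 1) ^ t := by
  induction t generalizing k with
  | zero =>
    cases k with
    | zero => simp [b_zero_zero]
    | succ k => simp [b_zero_succ]
  | succ t ih =>
    cases k with
    | zero => simp [b_succ_zero]
    | succ k =>
      rw [b_rec]
      have hC : (n - 2 * k).choose 2 ≤ n.choose 2 :=
        Nat.choose_le_choose 2 (Nat.sub_le n (2 * k))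
      have h1 := ih (k + 1)
      have h2 := ih k
      have hb : (k + 1 + 1) ^ t ≥ (k + 1) ^ t := Nat.pow_le_pow_left (by omega) t
      calc (k + 1) * b n t (k + 1) + (n - 2 * k).choose 2 * b n t k
          ≤ (k + 1) * (n.choose 2 ^ (k + 1) * (k + 1 + 1) ^ t)
            + n.choose 2 * (n.choose 2 ^ k * (k + 1) ^ t) := by
            gcongr
        _ ≤ (k + 1) * (n.choose 2 ^ (k + 1) * (k + 1 + 1) ^ t)
            + n.choose 2 ^ (k + 1) * (k + 1 + 1) ^ t := by
            rw [pow_succ, mul_comm (n.choose 2 ^ k) (n.choose 2), mul_assoc]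
            gcongr
        _ = n.choose 2 ^ (k + 1) * (k + 1 + 1) ^ (t + 1) := by ring
      


/-! ### Arithmetic helpers -/

lemma two_mul_choose_two (a : ℕ) : 2 * a.choose 2 = a * (a - 1) := by
  rw [Nat.choose_two_right, Nat.two_mul_div_two_of_even (Nat.even_mul_pred_self a)]

lemma choose_two_cast (a : ℕ) : (((a + 2).choose 2 : ℕ) : ℝ) = (a + 2) * (a + 1) / 2 := by
  have h := two_mul_choose_two (a + 2)
  have h2 : a + 2 - 1 = a + 1 := by omega
  rw [h2] at h
  have := congrArg (Nat.cast (R := ℝ)) h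
  push_cast at this
  linarith

lemma self_le_choose_two (hn : 3 ≤ n) : n ≤ n.choose 2 := by
  have h := two_mul_choose_two n
  have h2 : n * 2 ≤ n * (n - 1) := Nat.mul_le_mul_left n (by omega)
  generalize hA : n * (n - 1) = A at h h2
  generalize hC : n.choose 2 = C at h ⊢
  omega

lemma m_succ (hn : 3 ≤ n) : (n - 2) * (n + 1) / 2 + 1 = n.choose 2 := by
  obtain ⟨r, rfl⟩ : ∃ r, n = r + 3 := ⟨n - 3, by omega⟩
  have e1 : r + 3 - 2 = r + 1 := by omega
  have e2 : r + 3 + 1 = r + 4 := by omega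
  rw [e1, e2]
  have h2 := two_mul_choose_two (r + 3)
  have e3 : r + 3 - 1 = r + 2 := by omega
  rw [e3] at h2
  have hEven : Even ((r + 1) * (r + 4)) := by
    rcases Nat.even_or_odd r with ⟨c, rfl⟩ | ⟨c, rfl⟩
    · exact (Nat.even_mul).2 (Or.inr ⟨c + 2, by omega⟩)
    · exact (Nat.even_mul).2 (Or.inl ⟨c + 1, by omega⟩)
  have h1 : 2 * ((r + 1) * (r + 4) / 2) = (r + 1) * (r + 4) :=
    Nat.two_mul_div_two_of_even hEven
  have h3 : (r + 1) * (r + 4) + 2 = (r + 3) * (r + 2) := by ring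
  generalize hA : (r + 1) * (r + 4) = A at h1 h3 ⊢
  generalize hB : (r + 3) * (r + 2) = B at h2 h3
  generalize hC : (r + 3).choose 2 = C at h2 ⊢
  omega

lemma succ_lt_choose_two (hn : 3 ≤ n) {k : ℕ} (hk : k ≤ n / 2) : k + 1 < n.choose 2 := by
  have h1 := self_le_choose_two hn
  generalize hC : n.choose 2 = C at h1 ⊢
  omega

/-! ### The generating function values -/

noncomputable def Bs (n k : ℕ) : ℝ := ∑' t, (b n t k : ℝ) / (n.choose 2 : ℝ) ^ t

lemma q_pos (hn : 3 ≤ n) : (0 : ℝ) < (n.choose 2 : ℝ) := by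
  have := self_le_choose_two hn
  have : 0 < n.choose 2 := by omega
  exact_mod_cast this

lemma summable_b (hn : 3 ≤ n) {k : ℕ} (hk : k ≤ n / 2) :
    Summable (fun t => (b n t k : ℝ) / (n.choose 2 : ℝ) ^ t) := by
  have hq := q_pos hn
  have hk1 : (k : ℝ) + 1 < (n.choose 2 : ℝ) := by
    exact_mod_cast succ_lt_choose_two hn hk
  have hr0 : (0 : ℝ) ≤ ((k : ℝ) + 1) / (n.choose 2 : ℝ) := by positivity
  have hr1 : ((k : ℝ) + 1) / (n.choose 2 : ℝ) < 1 := (div_lt_one hq).2 hk1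
  refine Summable.of_nonneg_of_le (fun t => by positivity)
    (fun t => ?_) (((summable_geometric_of_lt_one hr0 hr1)).mul_left
      ((n.choose 2 : ℝ) ^ k))
  have hb := b_le (n := n) t k
  have hb' : (b n t k : ℝ) ≤ (n.choose 2 : ℝ) ^ k * ((k : ℝ) + 1) ^ t := by
    exact_mod_cast hb
  rw [div_pow, div_le_iff₀ (by positivity), mul_assoc, div_mul_cancel₀]
  · exact hb'
  · positivity

lemma Bs_zero (hn : 3 ≤ n) : Bs n 0 = 1 := by
  rw [Bs, tsum_eq_single 0]
  · simp [b_zero_zero]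
  · intro t ht
    cases t with
    | zero => exact absurd rfl ht
    | succ t => simp [b_succ_zero]

lemma Bs_rec (hn : 3 ≤ n) {k : ℕ} (hk : k + 1 ≤ n / 2) :
    ((n.choose 2 : ℝ) - (k + 1)) * Bs n (k + 1)
      = ((n - 2 * k).choose 2 : ℝ) * Bs n k := by
  have hq := q_pos hn
  have hqne : (n.choose 2 : ℝ) ≠ 0 := ne_of_gt hq
  have hs1 : Summable (fun t => (b n t (k + 1) : ℝ) / (n.choose 2 : ℝ) ^ t) :=
    summable_b hn hk
  have hs0 : Summable (fun t => (b n t k : ℝ) / (n.choose 2 : ℝ) ^ t) :=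
    summable_b hn (by omega)
  have key : Bs n (k + 1)
      = ∑' t, (b n (t + 1) (k + 1) : ℝ) / (n.choose 2 : ℝ) ^ (t + 1) := by
    rw [Bs, Summable.tsum_eq_zero_add hs1, b_zero_succ]
    simp
  have h2 : ∀ t, (b n (t + 1) (k + 1) : ℝ) / (n.choose 2 : ℝ) ^ (t + 1)
      = (((k : ℝ) + 1) / (n.choose 2 : ℝ)) * ((b n t (k + 1) : ℝ) / (n.choose 2 : ℝ) ^ t)
        + (((n - 2 * k).choose 2 : ℝ) / (n.choose 2 : ℝ))
            * ((b n t k : ℝ) / (n.choose 2 : ℝ) ^ t) := by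
    intro t
    rw [div_mul_div_comm, div_mul_div_comm, ← add_div, b_rec]
    push_cast
    rw [pow_succ]
    ring
  have h3 : Bs n (k + 1)
      = (((k : ℝ) + 1) / (n.choose 2 : ℝ)) * Bs n (k + 1)
        + (((n - 2 * k).choose 2 : ℝ) / (n.choose 2 : ℝ)) * Bs n k := by
    conv_lhs => rw [key]
    rw [tsum_congr h2, Summable.tsum_add (hs1.mul_left _) (hs0.mul_left _),
      tsum_mul_left, tsum_mul_left]
    rfl
  have h4 := congrArg (fun x => (n.choose 2 : ℝ) * x) h3
  simp only [mul_add, ← mul_assoc, mul_div_cancel₀ _ hqne] at h4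
  nlinarith [h4]

/-! ### Closed form -/

noncomputable def W (n k : ℕ) : ℝ :=
  ((n.factorial : ℝ) / (((n - 2 * k).factorial : ℝ) * 2 ^ k))
    * ((((n - 2) * (n + 1) / 2 - k).factorial : ℝ)
        / (((n - 2) * (n + 1) / 2).factorial : ℝ))

lemma W_zero : W n 0 = 1 := by
  have h1 : (n.factorial : ℝ) ≠ 0 := Nat.cast_ne_zero.2 n.factorial_ne_zero
  have h2 : (((n - 2) * (n + 1) / 2).factorial : ℝ) ≠ 0 :=
    Nat.cast_ne_zero.2 (Nat.factorial_ne_zero _)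
  simp [W, div_self, h1, h2]

lemma W_nonneg (n k : ℕ) : 0 ≤ W n k := by
  rw [W]
  positivity

lemma W_rec (hn : 3 ≤ n) {k : ℕ} (hk : k + 1 ≤ n / 2) :
    ((n.choose 2 : ℝ) - (k + 1)) * W n (k + 1)
      = ((n - 2 * k).choose 2 : ℝ) * W n k := by
  set m := (n - 2) * (n + 1) / 2 with hm
  have hm1 : m + 1 = n.choose 2 := m_succ hn
  have h2k : 2 * (k + 1) ≤ n := by
    have := Nat.div_mul_le_self n 2
    omega
  have hkm : k + 1 ≤ m := by
    have := self_le_choose_two hn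
    omega
  set s := n - 2 * (k + 1) with hs
  have hs2 : n - 2 * k = s + 2 := by omega
  have F1 : ((n - 2 * k).factorial : ℝ) = ((s : ℝ) + 2) * ((s : ℝ) + 1) * (s.factorial : ℝ) := by
    rw [hs2, Nat.factorial_succ, Nat.factorial_succ]
    push_cast
    ring
  have F2 : ((m - k).factorial : ℝ) = ((m : ℝ) - k) * ((m - (k + 1)).factorial : ℝ) := by
    rw [show m - k = (m - (k + 1)) + 1 by omega, Nat.factorial_succ]
    push_cast [Nat.cast_sub (by omega : k + 1 ≤ m)]
    ring
  have F3 : ((m : ℝ) - k) = (n.choose 2 : ℝ) - ((k : ℝ) + 1) := by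
    have : ((m : ℝ) + 1) = (n.choose 2 : ℝ) := by exact_mod_cast congrArg (Nat.cast (R := ℝ)) hm1
    linarith
  have F4 : (((n - 2 * k).choose 2 : ℕ) : ℝ) = ((s : ℝ) + 2) * ((s : ℝ) + 1) / 2 := by
    rw [hs2]
    exact_mod_cast choose_two_cast s
  have hfs : (s.factorial : ℝ) ≠ 0 := Nat.cast_ne_zero.2 (Nat.factorial_ne_zero _)
  have hfm : ((m.factorial : ℕ) : ℝ) ≠ 0 := Nat.cast_ne_zero.2 (Nat.factorial_ne_zero _)
  have hs1 : ((s : ℝ) + 1) ≠ 0 := by positivity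
  have hs2' : ((s : ℝ) + 2) ≠ 0 := by positivity
  rw [W, W, F4, ← hm]
  rw [show n - 2 * (k + 1) = s from rfl, F1, F2, F3]
  have h2p : (2 : ℝ) ^ (k + 1) = 2 * 2 ^ k := by ring
  rw [h2p]
  field_simp

lemma Bs_eq_W (hn : 3 ≤ n) : ∀ k, k ≤ n / 2 → Bs n k = W n k := by
  intro k
  induction k with
  | zero => intro _; rw [Bs_zero hn, W_zero]
  | succ k ih =>
    intro hk
    have hne : (n.choose 2 : ℝ) - ((k : ℝ) + 1) ≠ 0 := by
      have : (k : ℝ) + 1 < (n.choose 2 : ℝ) := by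
        exact_mod_cast succ_lt_choose_two hn (by omega : k ≤ n / 2)
      linarith
    refine mul_left_cancel₀ hne ?_
    rw [Bs_rec hn hk, W_rec hn hk, ih (by omega)]


lemma main_eq (hn : 3 ≤ n) :
    (∑' t : ℕ,
        (Nat.card {g : Fin t → {P : Finset (Fin n) // P.card = 2} //
            ∀ i j : Fin t, (g i : Finset (Fin n)) ≠ (g j : Finset (Fin n)) →
              Disjoint (g i : Finset (Fin n)) (g j : Finset (Fin n))} : ℝ)
          / (n.choose 2 : ℝ) ^ t)
      = 1 + ∑ k ∈ Finset.Icc 1 (n / 2), W n k := by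
  have hstep : ∀ t : ℕ,
      (Nat.card {g : Fin t → {P : Finset (Fin n) // P.card = 2} //
          ∀ i j : Fin t, (g i : Finset (Fin n)) ≠ (g j : Finset (Fin n)) →
            Disjoint (g i : Finset (Fin n)) (g j : Finset (Fin n))} : ℝ)
          / (n.choose 2 : ℝ) ^ t
        = ∑ k ∈ Finset.range (n / 2 + 1), (b n t k : ℝ) / (n.choose 2 : ℝ) ^ t := by
    intro t
    have hcg : Nat.card {g : Fin t → {P : Finset (Fin n) // P.card = 2} //
          ∀ i j : Fin t, (g i : Finset (Fin n)) ≠ (g j : Finset (Fin n)) →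
            Disjoint (g i : Finset (Fin n)) (g j : Finset (Fin n))}
        = ∑ k ∈ Finset.range (n / 2 + 1), b n t k := card_good t
    rw [hcg]
    push_cast
    rw [Finset.sum_div]
  rw [tsum_congr hstep,
    Summable.tsum_finsetSum (fun k hk => summable_b hn (by
      rw [Finset.mem_range] at hk; omega))]
  have hins : Finset.range (n / 2 + 1) = insert 0 (Finset.Icc 1 (n / 2)) := by
    ext x
    simp only [Finset.mem_range, Finset.mem_insert, Finset.mem_Icc]
    omega
  rw [hins, Finset.sum_insert (by simp)]
  have h0 : ∑' t, (b n t 0 : ℝ) / (n.choose 2 : ℝ) ^ t = 1 := Bs_zero hn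
  rw [h0]
  congr 1
  refine Finset.sum_congr rfl fun k hk => ?_
  rw [Finset.mem_Icc] at hk
  exact (Bs_eq_W hn k hk.2 : Bs n k = W n k)

lemma W_one_le (hn : 3 ≤ n) (h1 : 1 ≤ n / 2) : W n 1 ≤ 3 / 2 := by
  have h := W_rec hn (k := 0) h1
  rw [W_zero, mul_one] at h
  have e : n - 2 * 0 = n := by omega
  rw [e] at h
  push_cast at h
  have hq3 : (3 : ℝ) ≤ (n.choose 2 : ℝ) := by
    have : 3 ≤ n.choose 2 := le_trans hn (self_le_choose_two hn)
    exact_mod_cast this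
  have hW1 : 0 ≤ W n 1 := W_nonneg n 1
  nlinarith [h, hq3, hW1]

lemma W_ratio (hn : 3 ≤ n) {k : ℕ} (hk1 : 1 ≤ k) (hk : k + 1 ≤ n / 2) :
    W n (k + 1) ≤ (((n : ℝ) - 3) / n) * W n k := by
  have hrec := W_rec hn hk
  have hn4 : 4 ≤ n := by omega
  have hKpos : (0 : ℝ) < (n.choose 2 : ℝ) - ((k : ℝ) + 1) := by
    have h := succ_lt_choose_two hn (by omega : k ≤ n / 2)
    have h2 : ((k : ℝ) + 1) < (n.choose 2 : ℝ) := by exact_mod_cast h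
    linarith
  have hc1 : ((n - 2 * k).choose 2 : ℝ) ≤ ((n : ℝ) - 2) * ((n : ℝ) - 3) / 2 := by
    have hle : (n - 2 * k).choose 2 ≤ (n - 2).choose 2 :=
      Nat.choose_le_choose 2 (by omega)
    have e : n - 2 = (n - 4) + 2 := by omega
    have hcast : (((n - 2).choose 2 : ℕ) : ℝ) = ((n : ℝ) - 2) * ((n : ℝ) - 3) / 2 := by
      rw [e, choose_two_cast]
      have e2 : ((n - 4 : ℕ) : ℝ) = (n : ℝ) - 4 := by
        push_cast [Nat.cast_sub hn4]
        ring
      rw [e2]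
      ring
    calc ((n - 2 * k).choose 2 : ℝ) ≤ (((n - 2).choose 2 : ℕ) : ℝ) := by exact_mod_cast hle
      _ = ((n : ℝ) - 2) * ((n : ℝ) - 3) / 2 := hcast
  have hqr : (n.choose 2 : ℝ) = ((n : ℝ) * ((n : ℝ) - 1)) / 2 := by
    have hq := two_mul_choose_two n
    have := congrArg (Nat.cast (R := ℝ)) hq
    push_cast [Nat.cast_sub (by omega : 1 ≤ n)] at this
    linarith
  have hk2 : ((k : ℝ) + 1) ≤ (n : ℝ) / 2 := by
    have h2 : ((k + 1 : ℕ) : ℝ) ≤ ((n / 2 : ℕ) : ℝ) := Nat.cast_le.2 hk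
    have h3 : ((n / 2 : ℕ) : ℝ) ≤ (n : ℝ) / 2 := Nat.cast_div_le
    push_cast at h2
    linarith
  have hq2 : ((n : ℝ) * ((n : ℝ) - 2)) / 2 ≤ (n.choose 2 : ℝ) - ((k : ℝ) + 1) := by
    rw [hqr]
    linarith
  have hr0 : (0 : ℝ) ≤ ((n : ℝ) - 3) / n := by
    have : (3 : ℝ) ≤ (n : ℝ) := by exact_mod_cast hn
    have hnp : (0 : ℝ) < (n : ℝ) := by linarith
    exact div_nonneg (by linarith) (le_of_lt hnp)
  have hmid : ((n : ℝ) - 2) * ((n : ℝ) - 3) / 2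
      = (((n : ℝ) - 3) / n) * (((n : ℝ) * ((n : ℝ) - 2)) / 2) := by
    have hnne : (n : ℝ) ≠ 0 := by
      have : (3 : ℝ) ≤ (n : ℝ) := by exact_mod_cast hn
      linarith
    field_simp
  have hc : ((n - 2 * k).choose 2 : ℝ)
      ≤ (((n : ℝ) - 3) / n) * ((n.choose 2 : ℝ) - ((k : ℝ) + 1)) := by
    calc ((n - 2 * k).choose 2 : ℝ) ≤ ((n : ℝ) - 2) * ((n : ℝ) - 3) / 2 := hc1
      _ = (((n : ℝ) - 3) / n) * (((n : ℝ) * ((n : ℝ) - 2)) / 2) := hmid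
      _ ≤ (((n : ℝ) - 3) / n) * ((n.choose 2 : ℝ) - ((k : ℝ) + 1)) :=
          mul_le_mul_of_nonneg_left hq2 hr0
  have hWk := W_nonneg n k
  have h2 : ((n.choose 2 : ℝ) - ((k : ℝ) + 1)) * W n (k + 1)
      ≤ ((n.choose 2 : ℝ) - ((k : ℝ) + 1)) * ((((n : ℝ) - 3) / n) * W n k) := by
    calc ((n.choose 2 : ℝ) - ((k : ℝ) + 1)) * W n (k + 1)
        = ((n - 2 * k).choose 2 : ℝ) * W n k := by
          rw [← hrec]
      _ ≤ ((((n : ℝ) - 3) / n) * ((n.choose 2 : ℝ) - ((k : ℝ) + 1))) * W n k :=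
          mul_le_mul_of_nonneg_right hc hWk
      _ = ((n.choose 2 : ℝ) - ((k : ℝ) + 1)) * ((((n : ℝ) - 3) / n) * W n k) := by ring
  exact le_of_mul_le_mul_left h2 hKpos

lemma W_geom (hn : 3 ≤ n) : ∀ k, 1 ≤ k → k ≤ n / 2 →
    W n k ≤ (3 / 2) * (((n : ℝ) - 3) / n) ^ (k - 1) := by
  intro k
  induction k with
  | zero => omega
  | succ k ih =>
    intro _ hk
    cases Nat.eq_zero_or_pos k with
    | inl h0 =>
      subst h0
      simpa using W_one_le hn hk
    | inr hk1 =>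
      have hr0 : (0 : ℝ) ≤ ((n : ℝ) - 3) / n := by
        have : (3 : ℝ) ≤ (n : ℝ) := by exact_mod_cast hn
        exact div_nonneg (by linarith) (by linarith)
      have hih := ih hk1 (by omega)
      calc W n (k + 1) ≤ (((n : ℝ) - 3) / n) * W n k := W_ratio hn hk1 hk
        _ ≤ (((n : ℝ) - 3) / n) * ((3 / 2) * (((n : ℝ) - 3) / n) ^ (k - 1)) :=
            mul_le_mul_of_nonneg_left hih hr0
        _ = (3 / 2) * (((n : ℝ) - 3) / n) ^ (k - 1 + 1) := by ring
        _ = (3 / 2) * (((n : ℝ) - 3) / n) ^ (k + 1 - 1) := by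
            congr 2
            omega

lemma sum_W_le (hn : 3 ≤ n) :
    ∑ k ∈ Finset.Icc 1 (n / 2), W n k ≤ (n : ℝ) / 2 := by
  have hn3 : (3 : ℝ) ≤ (n : ℝ) := by exact_mod_cast hn
  have hnp : (0 : ℝ) < (n : ℝ) := by linarith
  set r : ℝ := ((n : ℝ) - 3) / n with hr
  have hr0 : 0 ≤ r := div_nonneg (by linarith) (le_of_lt hnp)
  have hr1 : r < 1 := by
    rw [hr, div_lt_one hnp]
    linarith
  have h1 : ∑ k ∈ Finset.Icc 1 (n / 2), W n k
      ≤ ∑ k ∈ Finset.Icc 1 (n / 2), (3 / 2) * r ^ (k - 1) :=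
    Finset.sum_le_sum fun k hk => by
      rw [Finset.mem_Icc] at hk
      exact W_geom hn k hk.1 hk.2
  have h2 : ∑ k ∈ Finset.Icc 1 (n / 2), (3 / 2 : ℝ) * r ^ (k - 1)
      ≤ (3 / 2) * (1 - r)⁻¹ := by
    have hsum : Summable (fun j : ℕ => r ^ j) := summable_geometric_of_lt_one hr0 hr1
    have h3 : ∑ k ∈ Finset.Icc 1 (n / 2), (3 / 2 : ℝ) * r ^ (k - 1)
        = (3 / 2) * ∑ k ∈ Finset.Icc 1 (n / 2), r ^ (k - 1) := by
      rw [Finset.mul_sum]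
    rw [h3]
    have h4 : ∑ k ∈ Finset.Icc 1 (n / 2), r ^ (k - 1)
        = ∑ j ∈ Finset.range (n / 2), r ^ j := by
      refine Finset.sum_nbij' (fun k => k - 1) (fun j => j + 1) ?_ ?_ ?_ ?_ ?_ <;>
        intros <;> simp_all [Finset.mem_Icc, Finset.mem_range] <;> omega
    rw [h4]
    have h5 : ∑ j ∈ Finset.range (n / 2), r ^ j ≤ ∑' j : ℕ, r ^ j :=
      Summable.sum_le_tsum _ (fun j _ => by positivity) hsum
    rw [tsum_geometric_of_lt_one hr0 hr1] at h5
    nlinarith [h5]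
  have h6 : (1 - r)⁻¹ = (n : ℝ) / 3 := by
    have : 1 - r = 3 / n := by
      rw [hr]
      field_simp
      ring
    rw [this]
    simp [div_div_eq_mul_div, one_div]
  calc ∑ k ∈ Finset.Icc 1 (n / 2), W n k ≤ (3 / 2) * (1 - r)⁻¹ := le_trans h1 h2
    _ = (3 / 2) * ((n : ℝ) / 3) := by rw [h6]
    _ = (n : ℝ) / 2 := by ring

end LCCP2

/-- In the 2-LCCP model with `n ≥ 3` coupons, the expected number of samples until
at least one coupon's label is recoverable (i.e. until the sampled-pairs graph first
has a component of size ≥ 3, equivalently until two distinct sampled pairs intersect)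
equals `1 + ∑_{i=1}^{⌊n/2⌋} (n!/((n-2i)!·2^i))·((m-i)!/m!)` with `m = (n-2)(n+1)/2`,
and this quantity is `O(n)`.  The expectation is written as the sum of the tail
probabilities `P(T(1) > t) = #{pair-sequences forming a partial matching}/C(n,2)^t`. -/
theorem two_LCCP_expected_first_recovery :
    ∃ C : ℝ, ∀ n : ℕ, 3 ≤ n →
      (∑' t : ℕ,
          (Nat.card {g : Fin t → {P : Finset (Fin n) // P.card = 2} //
              ∀ i j : Fin t, (g i : Finset (Fin n)) ≠ (g j : Finset (Fin n)) →
                Disjoint (g i : Finset (Fin n)) (g j : Finset (Fin n))} : ℝ)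
            / (n.choose 2 : ℝ) ^ t
        = 1 + ∑ i ∈ Finset.Icc 1 (n / 2),
            ((n.factorial : ℝ) / (((n - 2 * i).factorial : ℝ) * 2 ^ i))
              * ((((n - 2) * (n + 1) / 2 - i).factorial : ℝ)
                  / (((n - 2) * (n + 1) / 2).factorial : ℝ))) ∧
      (1 + ∑ i ∈ Finset.Icc 1 (n / 2),
            ((n.factorial : ℝ) / (((n - 2 * i).factorial : ℝ) * 2 ^ i))
              * ((((n - 2) * (n + 1) / 2 - i).factorial : ℝ)
                  / (((n - 2) * (n + 1) / 2).factorial : ℝ)))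
        ≤ C * n := by
  refine ⟨1, fun n hn => ?_⟩
  have hW : ∑ i ∈ Finset.Icc 1 (n / 2),
        ((n.factorial : ℝ) / (((n - 2 * i).factorial : ℝ) * 2 ^ i))
          * ((((n - 2) * (n + 1) / 2 - i).factorial : ℝ)
              / (((n - 2) * (n + 1) / 2).factorial : ℝ))
      = ∑ k ∈ Finset.Icc 1 (n / 2), LCCP2.W n k := by
    refine Finset.sum_congr rfl fun k _ => ?_
    rw [LCCP2.W]
  constructor
  · rw [hW]
    exact LCCP2.main_eq hn
  · rw [hW]
    have h1 := LCCP2.sum_W_le hn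
    have hn3 : (3 : ℝ) ≤ (n : ℝ) := by exact_mod_cast hn
    nlinarith [h1]
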